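/- Let α > 1. There exists C > 0 depending only on α such that for every t > 0 and every family (a_r)_{r∈[0,t]} of functions a_r : ℤ² → ℂ with a_r(0) = 0, such that r ↦ a_r(m) is continuous on [0,t] for every m and sup_{r∈[0,t]} ∑_{m∈ℤ²∖{0}} |m|^{−2α}|a_r(m)|² < ∞, one has: ∫₀ᵗ ∑_{k∈ℤ²∖{0}} |k|^{−2α} ( ∫ₛᵗ (t−r)^{−1/2} ( ∑_{ℓ∈ℤ²∖{0}} |ℓ|^{−2α}|a_r(ℓ−k)|² )^{1/2} dr )² ds ≤ C t² sup_{r∈[0,t]} ∑_{m∈ℤ²∖{0}} |m|^{−2α}|a_r(m)|². -/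

import Mathlib

open scoped ENNReal
open MeasureTheory intervalIntegral

/-- Squared Euclidean norm of a lattice point `k ∈ ℤ²`. -/
noncomputable def nsq (k : ℤ × ℤ) : ℝ := (k.1 : ℝ) ^ 2 + (k.2 : ℝ) ^ 2

namespace SGB

noncomputable def Wf (α : ℝ) (k : ℤ × ℤ) : ℝ := nsq k ^ (-α)

lemma nsq_nonneg (k : ℤ × ℤ) : 0 ≤ nsq k := by unfold nsq; positivity

lemma Wf_nonneg (α : ℝ) (k : ℤ × ℤ) : 0 ≤ Wf α k := Real.rpow_nonneg (nsq_nonneg k) _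

lemma one_le_nsq {k : ℤ × ℤ} (hk : k ≠ 0) : 1 ≤ nsq k := by
  have h : k.1 ≠ 0 ∨ k.2 ≠ 0 := by
    by_contra h
    push_neg at h
    exact hk (Prod.ext h.1 h.2)
  rcases h with h | h
  · have : (1 : ℤ) ≤ |k.1| := Int.one_le_abs h
    have : (1 : ℝ) ≤ |(k.1 : ℝ)| := by exact_mod_cast (by push_cast [← Int.cast_abs]; exact_mod_cast this : (1:ℝ) ≤ (|k.1| : ℝ))
    unfold nsq
    nlinarith [sq_nonneg ((k.2 : ℝ)), abs_nonneg ((k.1:ℝ)), sq_abs ((k.1:ℝ))]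
  · have : (1 : ℤ) ≤ |k.2| := Int.one_le_abs h
    have : (1 : ℝ) ≤ |(k.2 : ℝ)| := by exact_mod_cast (by push_cast [← Int.cast_abs]; exact_mod_cast this : (1:ℝ) ≤ (|k.2| : ℝ))
    unfold nsq
    nlinarith [sq_nonneg ((k.1 : ℝ)), abs_nonneg ((k.2:ℝ)), sq_abs ((k.2:ℝ))]

lemma Wf_zero {α : ℝ} (hα : 1 < α) : Wf α 0 = 0 := by
  have : nsq 0 = 0 := by simp [nsq]
  rw [Wf, this, Real.zero_rpow (by intro h; nlinarith [neg_eq_zero.mp h] : -α ≠ 0)]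

lemma nsq_one_zero : nsq (1, 0) = 1 := by simp [nsq]

/-- Geometric lemma: if `4|k|² ≤ |m|²` then `|m|² ≤ 4|m+k|²`. -/
lemma nsq_add_ge {k m : ℤ × ℤ} (h : 4 * nsq k ≤ nsq m) : nsq m ≤ 4 * nsq (m + k) := by
  have h1 : ((m + k).1 : ℝ) = (m.1 : ℝ) + (k.1 : ℝ) := by push_cast [Prod.fst_add]; ring
  have h2 : ((m + k).2 : ℝ) = (m.2 : ℝ) + (k.2 : ℝ) := by push_cast [Prod.snd_add]; ring
  unfold nsq at *
  rw [h1, h2]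
  nlinarith [sq_nonneg ((k.1 : ℝ) * (m.2 : ℝ) - (k.2 : ℝ) * (m.1 : ℝ)),
    sq_nonneg (3 * ((m.1:ℝ)^2 + (m.2:ℝ)^2) + 4 * ((k.1:ℝ)^2 + (k.2:ℝ)^2)
      + 8 * ((m.1:ℝ)*(k.1:ℝ) + (m.2:ℝ)*(k.2:ℝ))),
    sq_nonneg ((m.1:ℝ)*(k.1:ℝ) + (m.2:ℝ)*(k.2:ℝ))]

/-- If `|m|² ≤ 4|j|²` and `m ≠ 0` then `Wf α j ≤ 4^α * Wf α m`. -/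
lemma Wf_le {α : ℝ} (hα : 1 < α) {m j : ℤ × ℤ} (hm : m ≠ 0) (h : nsq m ≤ 4 * nsq j) :
    Wf α j ≤ 4 ^ α * Wf α m := by
  have hm1 : 1 ≤ nsq m := one_le_nsq hm
  have hj : 0 < nsq m / 4 := by linarith
  have hle : nsq m / 4 ≤ nsq j := by linarith
  have h1 : Wf α j ≤ (nsq m / 4) ^ (-α) :=
    Real.rpow_le_rpow_of_nonpos hj hle (by linarith)
  have h2 : (nsq m / 4) ^ (-α) = 4 ^ α * Wf α m := by
    rw [Real.div_rpow (by linarith) (by norm_num)]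
    rw [Real.rpow_neg (by norm_num : (0:ℝ) ≤ 4)]
    rw [Wf]
    field_simp
  linarith [h1, h2.le, h2.ge]

-- summable (fun n : ℤ => (1 + (n:ℝ)^2) ^ (-α/2)) for α > 1
lemma summable_b {α : ℝ} (hα : 1 < α) :
    Summable (fun n : ℤ => (1 + (n : ℝ) ^ 2) ^ (-(α / 2))) := by
  have hmaj : Summable (fun n : ℤ => |(n : ℝ)| ^ (-α) + if n = 0 then (1:ℝ) else 0) := by
    refine (Real.summable_abs_int_rpow hα).add ?_
    exact summable_of_ne_finset_zero (s := {0}) (by intro n hn; simp [Finset.mem_singleton] at hn; simp [hn])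
  refine Summable.of_nonneg_of_le (fun n => Real.rpow_nonneg (by positivity) _) (fun n => ?_) hmaj
  by_cases hn : n = 0
  · subst hn
    simp only [Int.cast_zero, if_pos rfl]
    have : ((1:ℝ) + 0 ^ 2) = 1 := by norm_num
    rw [this, Real.one_rpow]
    rw [abs_zero, Real.zero_rpow (ne_of_lt (by linarith : -α < 0))]
    norm_num
  · have h1 : (0:ℝ) < |(n:ℝ)| ^ 2 := by
      have : (n:ℝ) ≠ 0 := Int.cast_ne_zero.mpr hn
      positivity
    have hle : |(n:ℝ)| ^ 2 ≤ 1 + (n:ℝ)^2 := by nlinarith [sq_abs ((n:ℝ))]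
    have := Real.rpow_le_rpow_of_nonpos h1 hle (by linarith : -(α/2) ≤ 0)
    refine le_trans this ?_
    have : (|(n:ℝ)| ^ 2) ^ (-(α/2)) = |(n:ℝ)| ^ (-α) := by
      rw [← Real.rpow_natCast |(n:ℝ)| 2, ← Real.rpow_mul (abs_nonneg _)]
      congr 1; ring
    rw [this]
    simp [hn]

lemma summable_Wf {α : ℝ} (hα : 1 < α) : Summable (Wf α) := by
  have hb := summable_b hα
  have hbn : ∀ n : ℤ, 0 ≤ (1 + (n : ℝ) ^ 2) ^ (-(α / 2)) := fun n => Real.rpow_nonneg (by positivity) _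
  have hprod : Summable (fun k : ℤ × ℤ =>
      (1 + (k.1 : ℝ) ^ 2) ^ (-(α / 2)) * (1 + (k.2 : ℝ) ^ 2) ^ (-(α / 2))) :=
    hb.mul_of_nonneg hb hbn hbn
  refine Summable.of_nonneg_of_le (fun k => Wf_nonneg α k) (fun k => ?_) (hprod.mul_left (2 ^ α))
  by_cases hk : k = 0
  · subst hk
    rw [Wf_zero hα]
    positivity
  · have h1 : 1 ≤ nsq k := one_le_nsq hk
    -- Wf α k = nsq k ^ (-α) ≤ 2^α * (1 + nsq k)^(-α)
    have step1 : nsq k ^ (-α) ≤ 2 ^ α * (1 + nsq k) ^ (-α) := by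
      have hle : 1 + nsq k ≤ 2 * nsq k := by linarith
      have := Real.rpow_le_rpow_of_nonpos (by linarith : (0:ℝ) < 1 + nsq k) hle (by linarith : -α ≤ 0)
      have heq : (2 * nsq k) ^ (-α) = 2 ^ (-α) * nsq k ^ (-α) :=
        Real.mul_rpow (by norm_num) (nsq_nonneg k)
      -- (1+nsq)^(-α) ≥ 2^(-α) nsq^(-α); multiply by 2^α
      have h2 : 2 ^ (-α) * nsq k ^ (-α) ≤ (1 + nsq k) ^ (-α) := heq ▸ this
      have h2a : (0:ℝ) < 2 ^ α := Real.rpow_pos_of_pos (by norm_num) _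
      have hinv : (2:ℝ) ^ (-α) = (2 ^ α)⁻¹ := Real.rpow_neg (by norm_num) α
      calc nsq k ^ (-α) = 2 ^ α * (2 ^ (-α) * nsq k ^ (-α)) := by
            rw [hinv]; field_simp
        _ ≤ 2 ^ α * (1 + nsq k) ^ (-α) := by
            exact mul_le_mul_of_nonneg_left h2 h2a.le
    have step2 : (1 + nsq k) ^ (-α) ≤
        (1 + (k.1 : ℝ) ^ 2) ^ (-(α / 2)) * (1 + (k.2 : ℝ) ^ 2) ^ (-(α / 2)) := by
      have hx : (0:ℝ) < (1 + (k.1 : ℝ) ^ 2) * (1 + (k.2 : ℝ) ^ 2) := by positivity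
      have hle : (1 + (k.1 : ℝ) ^ 2) * (1 + (k.2 : ℝ) ^ 2) ≤ (1 + nsq k) ^ 2 := by
        unfold nsq; nlinarith [sq_nonneg ((k.1:ℝ) * (k.2:ℝ)), sq_nonneg ((k.1:ℝ)), sq_nonneg ((k.2:ℝ))]
      have h3 := Real.rpow_le_rpow_of_nonpos hx hle (by linarith : -(α/2) ≤ 0)
      have heq1 : ((1 + nsq k) ^ 2 : ℝ) ^ (-(α/2)) = (1 + nsq k) ^ (-α) := by
        rw [← Real.rpow_natCast (1 + nsq k) 2, ← Real.rpow_mul (by nlinarith : (0:ℝ) ≤ 1 + nsq k)]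
        congr 1; ring
      have heq2 : ((1 + (k.1 : ℝ) ^ 2) * (1 + (k.2 : ℝ) ^ 2)) ^ (-(α/2))
          = (1 + (k.1 : ℝ) ^ 2) ^ (-(α / 2)) * (1 + (k.2 : ℝ) ^ 2) ^ (-(α / 2)) :=
        Real.mul_rpow (by positivity) (by positivity)
      rw [heq1, heq2] at h3
      exact h3
    calc Wf α k = nsq k ^ (-α) := rfl
      _ ≤ 2 ^ α * (1 + nsq k) ^ (-α) := step1
      _ ≤ 2 ^ α * ((1 + (k.1 : ℝ) ^ 2) ^ (-(α / 2)) * (1 + (k.2 : ℝ) ^ 2) ^ (-(α / 2))) := by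
          refine mul_le_mul_of_nonneg_left step2 ?_
          positivity


lemma conv_term {α : ℝ} (hα : 1 < α) {m : ℤ × ℤ} (hm : m ≠ 0) (k : ℤ × ℤ) :
    Wf α k * Wf α (m + k) ≤ 4 ^ α * Wf α m * (Wf α k + Wf α (m + k)) := by
  have h4 : (0:ℝ) < 4 ^ α := Real.rpow_pos_of_pos (by norm_num) α
  have hk0 := Wf_nonneg α k
  have hmk0 := Wf_nonneg α (m + k)
  have hm0 := Wf_nonneg α m
  by_cases h : 4 * nsq k ≤ nsq m
  · have h2 : Wf α (m + k) ≤ 4 ^ α * Wf α m := Wf_le hα hm (nsq_add_ge h)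
    nlinarith
  · push_neg at h
    have h2 : Wf α k ≤ 4 ^ α * Wf α m := Wf_le hα hm (by linarith)
    nlinarith

lemma conv_sum {α : ℝ} (hα : 1 < α) {m : ℤ × ℤ} (hm : m ≠ 0) :
    ∑' k : ℤ × ℤ, ENNReal.ofReal (Wf α k) * ENNReal.ofReal (Wf α (m + k))
      ≤ ENNReal.ofReal ((2 * 4 ^ α * ∑' j : ℤ × ℤ, Wf α j) * Wf α m) := by
  have hZ := summable_Wf (α := α) hα
  have hZnn : 0 ≤ ∑' j : ℤ × ℤ, Wf α j := tsum_nonneg (Wf_nonneg α)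
  have hshift : ∑' k : ℤ × ℤ, ENNReal.ofReal (Wf α (m + k))
      = ∑' j : ℤ × ℤ, ENNReal.ofReal (Wf α j) :=
    (Equiv.addLeft m).tsum_eq (fun j => ENNReal.ofReal (Wf α j))
  have hofZ : ∑' j : ℤ × ℤ, ENNReal.ofReal (Wf α j)
      = ENNReal.ofReal (∑' j : ℤ × ℤ, Wf α j) :=
    (ENNReal.ofReal_tsum_of_nonneg (Wf_nonneg α) hZ).symm
  calc ∑' k : ℤ × ℤ, ENNReal.ofReal (Wf α k) * ENNReal.ofReal (Wf α (m + k))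
      ≤ ∑' k : ℤ × ℤ, ENNReal.ofReal (4 ^ α * Wf α m)
          * (ENNReal.ofReal (Wf α k) + ENNReal.ofReal (Wf α (m + k))) := by
        refine ENNReal.tsum_le_tsum (fun k => ?_)
        rw [← ENNReal.ofReal_mul (Wf_nonneg α k),
          ← ENNReal.ofReal_add (Wf_nonneg _ _) (Wf_nonneg _ _),
          ← ENNReal.ofReal_mul (mul_nonneg (Real.rpow_pos_of_pos (by norm_num) α).le (Wf_nonneg α m))]
        exact ENNReal.ofReal_le_ofReal (conv_term hα hm k)
    _ = ENNReal.ofReal (4 ^ α * Wf α m)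
          * ((∑' k : ℤ × ℤ, ENNReal.ofReal (Wf α k))
            + ∑' k : ℤ × ℤ, ENNReal.ofReal (Wf α (m + k))) := by
        rw [ENNReal.tsum_mul_left, ENNReal.tsum_add]
    _ = ENNReal.ofReal ((2 * 4 ^ α * ∑' j : ℤ × ℤ, Wf α j) * Wf α m) := by
        rw [hshift, hofZ, ← ENNReal.ofReal_add hZnn hZnn,
          ← ENNReal.ofReal_mul (mul_nonneg (Real.rpow_pos_of_pos (by norm_num) α).le (Wf_nonneg α m))]
        congr 1
        ring



lemma rpow_half_mul (x : ℝ≥0∞) : x ^ ((1:ℝ)/2) * x ^ ((1:ℝ)/2) = x := by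
  rw [← ENNReal.rpow_add_of_nonneg ((1:ℝ)/2) ((1:ℝ)/2) (by norm_num) (by norm_num)]
  norm_num

lemma rpow_half_rpow_two (x : ℝ≥0∞) : (x ^ ((1:ℝ)/2)) ^ (2:ℝ) = x := by
  rw [← ENNReal.rpow_mul]; norm_num

lemma Wf_def (α : ℝ) (k : ℤ × ℤ) : nsq k ^ (-α) = Wf α k := rfl

end SGB

/-- Deterministic core of the second bound of Lemma 4.3: for `α > 1` there is `C > 0` such that
for all `t > 0` and all families `(a_r)_{r∈[0,t]}` of Fourier data with `a_r 0 = 0`,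
`r ↦ a_r m` continuous and `sup_{r∈[0,t]} ∑_{m≠0} |m|^{−2α}|a_r m|² < ∞`,
`∫₀ᵗ ∑_{k≠0} |k|^{−2α} (∫ₛᵗ (t−r)^{−1/2} (∑_{ℓ≠0} |ℓ|^{−2α}|a_r(ℓ−k)|²)^{1/2} dr)² ds
  ≤ C t² sup_{r∈[0,t]} ∑_{m≠0} |m|^{−2α}|a_r m|²`. -/
theorem schauder_gaussian_bound (α : ℝ) (hα : 1 < α) :
    ∃ C : ℝ, 0 < C ∧ ∀ t : ℝ, 0 < t → ∀ a : ℝ → (ℤ × ℤ) → ℂ,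
      (∀ r ∈ Set.Icc (0 : ℝ) t, a r 0 = 0) →
      (∀ m : ℤ × ℤ, ContinuousOn (fun r => a r m) (Set.Icc 0 t)) →
      (⨆ r ∈ Set.Icc (0 : ℝ) t, ∑' m : ℤ × ℤ,
          (if m ≠ 0 then ENNReal.ofReal ((nsq m) ^ (-α) * ‖a r m‖ ^ 2) else 0)) < ⊤ →
      (∫⁻ s in Set.Ioc (0 : ℝ) t, ∑' k : ℤ × ℤ,
          (if k ≠ 0 then
            ENNReal.ofReal ((nsq k) ^ (-α) *
              (∫ r in s..t, (t - r) ^ (-(1 / 2) : ℝ) *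
                Real.sqrt (∑' ℓ : ℤ × ℤ,
                  if ℓ ≠ 0 then (nsq ℓ) ^ (-α) * ‖a r (ℓ - k)‖ ^ 2 else 0)) ^ 2)
          else 0)) ≤
        ENNReal.ofReal (C * t ^ 2) *
          ⨆ r ∈ Set.Icc (0 : ℝ) t, ∑' m : ℤ × ℤ,
            (if m ≠ 0 then ENNReal.ofReal ((nsq m) ^ (-α) * ‖a r m‖ ^ 2) else 0) := by
  classical
  have hZsum := SGB.summable_Wf (α := α) hα
  have hZnn : 0 ≤ ∑' j : ℤ × ℤ, SGB.Wf α j := tsum_nonneg (fun j => SGB.Wf_nonneg α j)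
  have hZ1 : 1 ≤ ∑' j : ℤ × ℤ, SGB.Wf α j := by
    have hle := Summable.le_tsum hZsum (1, 0) (fun j _ => SGB.Wf_nonneg α j)
    have h1 : SGB.Wf α (1, 0) = 1 := by rw [SGB.Wf, SGB.nsq_one_zero, Real.one_rpow]
    linarith
  have h4 : (0:ℝ) < 4 ^ α := Real.rpow_pos_of_pos (by norm_num) α
  set Z : ℝ := ∑' j : ℤ × ℤ, SGB.Wf α j with hZdef
  refine ⟨8 * 4 ^ α * Z, by nlinarith, fun t ht a ha0 hacont hsup => ?_⟩
  simp only [SGB.Wf_def α] at hsup ⊢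
  set SeF : ℝ → ℝ≥0∞ := fun r => ∑' m : ℤ × ℤ, ENNReal.ofReal (SGB.Wf α m * ‖a r m‖ ^ 2)
    with hSeF
  have hifeq : ∀ r : ℝ, (∑' m : ℤ × ℤ,
      (if m ≠ 0 then ENNReal.ofReal (SGB.Wf α m * ‖a r m‖ ^ 2) else 0)) = SeF r := by
    intro r
    refine tsum_congr (fun m => ?_)
    by_cases hm : m = 0
    · subst hm
      simp [SGB.Wf_zero hα]
    · simp [hm]
  simp only [hifeq] at hsup ⊢
  set S : ℝ≥0∞ := ⨆ r ∈ Set.Icc (0:ℝ) t, SeF r with hSdef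
  have hSele : ∀ r ∈ Set.Icc (0:ℝ) t, SeF r ≤ S := fun r hr => le_biSup _ hr
  set c2 : ℝ := 2 * 4 ^ α * Z with hc2def
  have hc2nn : 0 ≤ c2 := by positivity
  set A : ℤ × ℤ → ℝ≥0∞ := fun k => ENNReal.ofReal (SGB.Wf α k) with hA
  set G : ℤ × ℤ → ℝ → ℝ≥0∞ :=
    fun k r => ∑' ℓ : ℤ × ℤ, ENNReal.ofReal (SGB.Wf α ℓ * ‖a r (ℓ - k)‖ ^ 2) with hG
  set κ : ℝ → ℝ≥0∞ := fun r => ENNReal.ofReal ((t - r) ^ (-(1/2) : ℝ)) with hκ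
  have hmeasκ : Measurable κ := by
    rw [hκ]
    exact ENNReal.measurable_ofReal.comp ((measurable_const.sub measurable_id).pow measurable_const)
  -- the convolution bound
  have hH : ∀ r ∈ Set.Icc (0:ℝ) t,
      (∑' k : ℤ × ℤ, A k * G k r) ≤ ENNReal.ofReal c2 * S := by
    intro r hr
    have h1 : ∀ k : ℤ × ℤ, A k * G k r
        = ∑' m : ℤ × ℤ, A k * ENNReal.ofReal (SGB.Wf α (m + k) * ‖a r m‖ ^ 2) := by
      intro k
      rw [hG]
      dsimp only
      rw [← ENNReal.tsum_mul_left]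
      refine (((Equiv.addRight k).tsum_eq
        (fun ℓ => A k * ENNReal.ofReal (SGB.Wf α ℓ * ‖a r (ℓ - k)‖ ^ 2))).symm.trans ?_)
      refine tsum_congr (fun m => ?_)
      simp [Equiv.coe_addRight, add_sub_cancel_right]
    calc (∑' k : ℤ × ℤ, A k * G k r)
        = ∑' k : ℤ × ℤ, ∑' m : ℤ × ℤ, A k * ENNReal.ofReal (SGB.Wf α (m + k) * ‖a r m‖ ^ 2) :=
          tsum_congr h1
      _ = ∑' m : ℤ × ℤ, ∑' k : ℤ × ℤ, A k * ENNReal.ofReal (SGB.Wf α (m + k) * ‖a r m‖ ^ 2) :=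
          ENNReal.tsum_comm
      _ = ∑' m : ℤ × ℤ, (∑' k : ℤ × ℤ, ENNReal.ofReal (SGB.Wf α k)
            * ENNReal.ofReal (SGB.Wf α (m + k))) * ENNReal.ofReal (‖a r m‖ ^ 2) := by
          refine tsum_congr (fun m => ?_)
          rw [← ENNReal.tsum_mul_right]
          refine tsum_congr (fun k => ?_)
          rw [ENNReal.ofReal_mul (SGB.Wf_nonneg _ _), hA]
          ring
      _ ≤ ∑' m : ℤ × ℤ, ENNReal.ofReal (c2 * SGB.Wf α m) * ENNReal.ofReal (‖a r m‖ ^ 2) := by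
          refine ENNReal.tsum_le_tsum (fun m => ?_)
          by_cases hm : m = 0
          · subst hm
            rw [ha0 r hr]
            simp
          · refine mul_le_mul_left ?_ _
            have hconv := SGB.conv_sum (α := α) hα hm
            rw [← hZdef] at hconv
            exact hconv
      _ = ENNReal.ofReal c2 * SeF r := by
          rw [hSeF]
          dsimp only
          rw [← ENNReal.tsum_mul_left]
          refine tsum_congr (fun m => ?_)
          rw [ENNReal.ofReal_mul hc2nn, ENNReal.ofReal_mul (SGB.Wf_nonneg _ _)]
          ring
      _ ≤ ENNReal.ofReal c2 * S := mul_le_mul_right (hSele r hr) _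
  -- the per-s bound
  have key : ∀ s ∈ Set.Ioc (0:ℝ) t,
      (∑' k : ℤ × ℤ,
          (if k ≠ 0 then
            ENNReal.ofReal (SGB.Wf α k *
              (∫ r in s..t, (t - r) ^ (-(1 / 2) : ℝ) *
                Real.sqrt (∑' ℓ : ℤ × ℤ,
                  if ℓ ≠ 0 then SGB.Wf α ℓ * ‖a r (ℓ - k)‖ ^ 2 else 0)) ^ 2)
          else 0))
        ≤ ENNReal.ofReal (4 * t * c2) * S := by
    intro s hs
    obtain ⟨hs0, hst⟩ := hs
    have hsub : Set.Ioc s t ⊆ Set.Icc (0:ℝ) t :=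
      fun x hx => ⟨(hs0.trans hx.1).le, hx.2⟩
    have hmeasG : ∀ k, AEMeasurable (G k) (MeasureTheory.volume.restrict (Set.Ioc s t)) := by
      intro k
      rw [hG]
      refine AEMeasurable.ennreal_tsum (fun ℓ => ?_)
      have hc : ContinuousOn (fun r => SGB.Wf α ℓ * ‖a r (ℓ - k)‖ ^ 2) (Set.Ioc s t) :=
        continuousOn_const.mul (((hacont (ℓ - k)).mono hsub).norm.pow 2)
      exact ENNReal.measurable_ofReal.comp_aemeasurable (hc.aemeasurable measurableSet_Ioc)
    have hker_int : MeasureTheory.IntegrableOn (fun r => (t - r) ^ (-(1/2):ℝ)) (Set.Ioc s t) := by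
      have h1 : IntervalIntegrable (fun x : ℝ => x ^ (-(1/2):ℝ)) MeasureTheory.volume 0 (t - s) :=
        intervalIntegral.intervalIntegrable_rpow' (by norm_num)
      have h2 := (h1.comp_sub_left t).symm
      simp only [sub_zero, sub_sub_cancel] at h2
      exact (intervalIntegrable_iff_integrableOn_Ioc_of_le hst).1 h2
    have hker_nn : 0 ≤ᵐ[MeasureTheory.volume.restrict (Set.Ioc s t)]
        fun r => (t - r) ^ (-(1/2):ℝ) :=
      (MeasureTheory.ae_restrict_iff' measurableSet_Ioc).2
        (Filter.Eventually.of_forall (fun r hr => Real.rpow_nonneg (by linarith [hr.2]) _))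
    have hκint : (∫⁻ r in Set.Ioc s t, κ r) = ENNReal.ofReal (2 * (t - s) ^ ((1:ℝ)/2)) := by
      simp only [hκ]
      rw [← MeasureTheory.ofReal_integral_eq_lintegral_ofReal hker_int hker_nn]
      congr 1
      rw [← intervalIntegral.integral_of_le hst]
      have hcomp : (∫ r in s..t, (t - r) ^ (-(1/2):ℝ))
          = ∫ x in t - t..t - s, x ^ (-(1/2):ℝ) :=
        intervalIntegral.integral_comp_sub_left (fun x : ℝ => x ^ (-(1/2):ℝ)) t
      rw [hcomp, sub_self]
      rw [integral_rpow (Or.inl (by norm_num : (-1:ℝ) < -(1/2)))]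
      rw [Real.zero_rpow (by norm_num : (-(1/2):ℝ) + 1 ≠ 0)]
      norm_num
      ring
    set E : ℝ≥0∞ := ENNReal.ofReal (2 * (t - s) ^ ((1:ℝ)/2)) with hE
    have hEmul : E * E = ENNReal.ofReal (4 * (t - s)) := by
      have h12 : (0:ℝ) ≤ (t - s) ^ ((1:ℝ)/2) := Real.rpow_nonneg (by linarith) _
      rw [hE, ← ENNReal.ofReal_mul (by nlinarith)]
      congr 1
      have hhalf : (t - s) ^ ((1:ℝ)/2) * (t - s) ^ ((1:ℝ)/2) = t - s := by
        rw [← Real.rpow_add' (by linarith) (by norm_num)]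
        norm_num
      nlinarith [hhalf]
    have hk : ∀ k : ℤ × ℤ,
        (if k ≠ 0 then
            ENNReal.ofReal (SGB.Wf α k *
              (∫ r in s..t, (t - r) ^ (-(1 / 2) : ℝ) *
                Real.sqrt (∑' ℓ : ℤ × ℤ,
                  if ℓ ≠ 0 then SGB.Wf α ℓ * ‖a r (ℓ - k)‖ ^ 2 else 0)) ^ 2)
          else 0)
        ≤ A k * (E * ∫⁻ r in Set.Ioc s t, κ r * G k r) := by
      intro k
      by_cases hk0 : k = 0
      · rw [if_neg (by simp [hk0])]
        exact zero_le
      · rw [if_pos hk0]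
        set gR : ℝ → ℝ := fun r => ∑' ℓ : ℤ × ℤ,
          if ℓ ≠ 0 then SGB.Wf α ℓ * ‖a r (ℓ - k)‖ ^ 2 else 0 with hgR
        have hgnn : ∀ r, 0 ≤ gR r := by
          intro r
          refine tsum_nonneg (fun ℓ => ?_)
          split
          · exact mul_nonneg (SGB.Wf_nonneg α ℓ) (by positivity)
          · exact le_rfl
        have hInn : 0 ≤ ∫ r in s..t, (t - r) ^ (-(1/2):ℝ) * Real.sqrt (gR r) :=
          intervalIntegral.integral_nonneg hst
            (fun r hr => mul_nonneg (Real.rpow_nonneg (by linarith [hr.2]) _) (Real.sqrt_nonneg _))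
        rw [ENNReal.ofReal_mul (SGB.Wf_nonneg α k), ENNReal.ofReal_pow hInn]
        refine mul_le_mul_right ?_ _
        have hIle : ENNReal.ofReal (∫ r in s..t, (t - r) ^ (-(1/2):ℝ) * Real.sqrt (gR r))
            ≤ ∫⁻ r in Set.Ioc s t, κ r * (G k r) ^ ((1:ℝ)/2) := by
          have hfnn : 0 ≤ᵐ[MeasureTheory.volume.restrict (Set.Ioc s t)]
              fun r => (t - r) ^ (-(1/2):ℝ) * Real.sqrt (gR r) :=
            (MeasureTheory.ae_restrict_iff' measurableSet_Ioc).2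
              (Filter.Eventually.of_forall (fun r hr =>
                mul_nonneg (Real.rpow_nonneg (by linarith [hr.2]) _) (Real.sqrt_nonneg _)))
          have h1 : ENNReal.ofReal (∫ r in s..t, (t - r) ^ (-(1/2):ℝ) * Real.sqrt (gR r))
              ≤ ∫⁻ r in Set.Ioc s t,
                  ENNReal.ofReal ((t - r) ^ (-(1/2):ℝ) * Real.sqrt (gR r)) := by
            rw [intervalIntegral.integral_of_le hst]
            by_cases hint : MeasureTheory.IntegrableOn
                (fun r => (t - r) ^ (-(1/2):ℝ) * Real.sqrt (gR r)) (Set.Ioc s t)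
            · rw [MeasureTheory.ofReal_integral_eq_lintegral_ofReal hint hfnn]
            · rw [MeasureTheory.integral_undef hint]
              simp
          refine h1.trans (MeasureTheory.lintegral_mono_ae
            ((MeasureTheory.ae_restrict_iff' measurableSet_Ioc).2
              (Filter.Eventually.of_forall (fun r hr => ?_))))
          rw [ENNReal.ofReal_mul (Real.rpow_nonneg (by linarith [hr.2]) _)]
          refine mul_le_mul_right ?_ _
          rw [Real.sqrt_eq_rpow, ← ENNReal.ofReal_rpow_of_nonneg (hgnn r) (by norm_num)]
          refine ENNReal.rpow_le_rpow ?_ (by norm_num)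
          have hgg : gR r = ∑' ℓ : ℤ × ℤ, SGB.Wf α ℓ * ‖a r (ℓ - k)‖ ^ 2 := by
            refine tsum_congr (fun ℓ => ?_)
            by_cases hl : ℓ = 0
            · subst hl
              simp [SGB.Wf_zero hα]
            · simp [hl]
          rw [hgg, hG]
          dsimp only
          by_cases hsum : Summable (fun ℓ : ℤ × ℤ => SGB.Wf α ℓ * ‖a r (ℓ - k)‖ ^ 2)
          · rw [ENNReal.ofReal_tsum_of_nonneg
              (fun ℓ => mul_nonneg (SGB.Wf_nonneg α ℓ) (by positivity)) hsum]
          · rw [tsum_eq_zero_of_not_summable hsum]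
            simp
        have hCS : (∫⁻ r in Set.Ioc s t, κ r * (G k r) ^ ((1:ℝ)/2)) ^ (2:ℕ)
            ≤ E * ∫⁻ r in Set.Ioc s t, κ r * G k r := by
          have hpq : Real.HolderConjugate 2 2 := Real.HolderConjugate.two_two
          have hfm : AEMeasurable (fun r => (κ r) ^ ((1:ℝ)/2))
              (MeasureTheory.volume.restrict (Set.Ioc s t)) :=
            (hmeasκ.pow measurable_const).aemeasurable
          have hgm : AEMeasurable (fun r => (κ r * G k r) ^ ((1:ℝ)/2))
              (MeasureTheory.volume.restrict (Set.Ioc s t)) :=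
            (hmeasκ.aemeasurable.mul (hmeasG k)).pow aemeasurable_const
          have heq : (∫⁻ r in Set.Ioc s t, κ r * (G k r) ^ ((1:ℝ)/2))
              = ∫⁻ r in Set.Ioc s t,
                  ((fun r => (κ r) ^ ((1:ℝ)/2)) * fun r => (κ r * G k r) ^ ((1:ℝ)/2)) r := by
            refine MeasureTheory.lintegral_congr (fun r => ?_)
            simp only [Pi.mul_apply]
            rw [ENNReal.mul_rpow_of_nonneg _ _ (by norm_num : (0:ℝ) ≤ 1/2)]
            rw [← mul_assoc, SGB.rpow_half_mul]
          have hH2 := ENNReal.lintegral_mul_le_Lp_mul_Lq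
            (MeasureTheory.volume.restrict (Set.Ioc s t)) hpq hfm hgm
          have r1 : (∫⁻ r in Set.Ioc s t, ((κ r) ^ ((1:ℝ)/2)) ^ (2:ℝ)) = E := by
            rw [show (∫⁻ r in Set.Ioc s t, ((κ r) ^ ((1:ℝ)/2)) ^ (2:ℝ))
                = ∫⁻ r in Set.Ioc s t, κ r from
              MeasureTheory.lintegral_congr (fun r => SGB.rpow_half_rpow_two (κ r))]
            exact hκint
          have r2 : (∫⁻ r in Set.Ioc s t, ((κ r * G k r) ^ ((1:ℝ)/2)) ^ (2:ℝ))
              = ∫⁻ r in Set.Ioc s t, κ r * G k r :=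
            MeasureTheory.lintegral_congr (fun r => SGB.rpow_half_rpow_two _)
          rw [heq, pow_two]
          refine le_trans (mul_le_mul' hH2 hH2) ?_
          rw [mul_mul_mul_comm, SGB.rpow_half_mul, SGB.rpow_half_mul, r1, r2]
        calc (ENNReal.ofReal (∫ r in s..t, (t - r) ^ (-(1/2):ℝ) * Real.sqrt (gR r))) ^ (2:ℕ)
            ≤ (∫⁻ r in Set.Ioc s t, κ r * (G k r) ^ ((1:ℝ)/2)) ^ (2:ℕ) := by
              rw [pow_two, pow_two]; exact mul_le_mul' hIle hIle
          _ ≤ E * ∫⁻ r in Set.Ioc s t, κ r * G k r := hCS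
    calc (∑' k : ℤ × ℤ,
          (if k ≠ 0 then
            ENNReal.ofReal (SGB.Wf α k *
              (∫ r in s..t, (t - r) ^ (-(1 / 2) : ℝ) *
                Real.sqrt (∑' ℓ : ℤ × ℤ,
                  if ℓ ≠ 0 then SGB.Wf α ℓ * ‖a r (ℓ - k)‖ ^ 2 else 0)) ^ 2)
          else 0))
        ≤ ∑' k : ℤ × ℤ, A k * (E * ∫⁻ r in Set.Ioc s t, κ r * G k r) :=
          ENNReal.tsum_le_tsum hk
      _ = E * ∑' k : ℤ × ℤ, ∫⁻ r in Set.Ioc s t, A k * (κ r * G k r) := by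
          rw [← ENNReal.tsum_mul_left]
          refine tsum_congr (fun k => ?_)
          rw [MeasureTheory.lintegral_const_mul' (A k) _ ENNReal.ofReal_ne_top]
          ring
      _ = E * ∫⁻ r in Set.Ioc s t, ∑' k : ℤ × ℤ, A k * (κ r * G k r) := by
          rw [MeasureTheory.lintegral_tsum (f := fun k r => A k * (κ r * G k r))
            (fun k => aemeasurable_const.mul (hmeasκ.aemeasurable.mul (hmeasG k)))]
      _ = E * ∫⁻ r in Set.Ioc s t, κ r * ∑' k : ℤ × ℤ, A k * G k r := by
          congr 1
          refine MeasureTheory.lintegral_congr (fun r => ?_)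
          rw [← ENNReal.tsum_mul_left]
          exact tsum_congr (fun k => by ring)
      _ ≤ E * ∫⁻ r in Set.Ioc s t, κ r * (ENNReal.ofReal c2 * S) := by
          refine mul_le_mul_right (MeasureTheory.lintegral_mono_ae
            ((MeasureTheory.ae_restrict_iff' measurableSet_Ioc).2
              (Filter.Eventually.of_forall (fun r hr =>
                mul_le_mul_right (hH r (hsub hr)) _)))) _
      _ = E * ((∫⁻ r in Set.Ioc s t, κ r) * (ENNReal.ofReal c2 * S)) := by
          rw [MeasureTheory.lintegral_mul_const' _ _
            (ENNReal.mul_ne_top ENNReal.ofReal_ne_top hsup.ne)]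
      _ = (E * E) * (ENNReal.ofReal c2 * S) := by rw [hκint]; ring
      _ = ENNReal.ofReal (4 * (t - s)) * (ENNReal.ofReal c2 * S) := by rw [hEmul]
      _ ≤ ENNReal.ofReal (4 * t) * (ENNReal.ofReal c2 * S) :=
          mul_le_mul_left (ENNReal.ofReal_le_ofReal (by linarith)) _
      _ = ENNReal.ofReal (4 * t * c2) * S := by
          rw [← mul_assoc, ← ENNReal.ofReal_mul (by positivity)]
  calc (∫⁻ s in Set.Ioc (0:ℝ) t, ∑' k : ℤ × ℤ,
          (if k ≠ 0 then
            ENNReal.ofReal (SGB.Wf α k *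
              (∫ r in s..t, (t - r) ^ (-(1 / 2) : ℝ) *
                Real.sqrt (∑' ℓ : ℤ × ℤ,
                  if ℓ ≠ 0 then SGB.Wf α ℓ * ‖a r (ℓ - k)‖ ^ 2 else 0)) ^ 2)
          else 0))
      ≤ ∫⁻ _ in Set.Ioc (0:ℝ) t, ENNReal.ofReal (4 * t * c2) * S :=
        MeasureTheory.lintegral_mono_ae
          ((MeasureTheory.ae_restrict_iff' measurableSet_Ioc).2
            (Filter.Eventually.of_forall key))
    _ = ENNReal.ofReal (4 * t * c2) * S * MeasureTheory.volume (Set.Ioc (0:ℝ) t) :=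
        MeasureTheory.setLIntegral_const _ _
    _ = ENNReal.ofReal (4 * t * c2) * S * ENNReal.ofReal t := by
        rw [Real.volume_Ioc, sub_zero]
    _ = ENNReal.ofReal (8 * 4 ^ α * Z * t ^ 2) * S := by
        rw [mul_comm (ENNReal.ofReal (4 * t * c2)) S, mul_assoc,
          ← ENNReal.ofReal_mul (by positivity), mul_comm S _]
        congr 2
        rw [hc2def]
        ring
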